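/- (Proposition 3, part 2) Assume r > m and set S1 = (r − m)/cSS. If S1·(β − cIS) < m + γ + μ, then the disease-free equilibrium (S1, 0) is locally asymptotically stable: for every ε > 0 there exists δ > 0 such that every solution of the reduced system with nonnegative initial conditions within distance δ of (S1, 0) remains within distance ε of (S1, 0) for all t ≥ 0, and there exists δ₀ > 0 such that every such solution starting within distance δ₀ of (S1, 0) converges to (S1, 0) as t → ∞. -/

import Mathlib

open Filter Topology Set

/-- `(S, I)` is a solution of the reduced system on `[0, ∞)`. -/
def IsSol (r m β γ μ cSS cSI cIS cII a : ℝ) (S I : ℝ → ℝ) : Prop :=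
  ∀ t : ℝ, 0 ≤ t →
    HasDerivAt S (r * S t + a * r * I t - m * S t
      - (cSS * S t + cSI * I t) * S t - β * S t * I t + γ * I t) t ∧
    HasDerivAt I (-(m * I t) - (cIS * S t + cII * I t) * I t
      + β * S t * I t - γ * I t - μ * I t) t

/-- `(s, i)` is an equilibrium point of the reduced system. -/
def IsEquilibrium (r m β γ μ cSS cSI cIS cII a : ℝ) (s i : ℝ) : Prop :=
  r * s + a * r * i - m * s - (cSS * s + cSI * i) * s - β * s * i + γ * i = 0 ∧
  -(m * i) - (cIS * s + cII * i) * i + β * s * i - γ * i - μ * i = 0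

/-- All parameters are positive and `a ∈ (0, 1)`. -/
def ParamsPos (r m β γ μ cSS cSI cIS cII a : ℝ) : Prop :=
  0 < r ∧ 0 < m ∧ 0 < β ∧ 0 < γ ∧ 0 < μ ∧
    0 < cSS ∧ 0 < cSI ∧ 0 < cIS ∧ 0 < cII ∧ 0 < a ∧ a < 1


lemma I_nonneg (r m β γ μ cSS cSI cIS cII a : ℝ) (S I : ℝ → ℝ)
    (hsol : IsSol r m β γ μ cSS cSI cIS cII a S I) (hI0 : 0 ≤ I 0) :
    ∀ t : ℝ, 0 ≤ t → 0 ≤ I t := by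
  by_contra hx
  push_neg at hx
  obtain ⟨t1, ht1, hIt1⟩ := hx
  have hScont : ∀ t : ℝ, 0 ≤ t → ContinuousAt S t := fun t ht => (hsol t ht).1.continuousAt
  have hIcont : ∀ t : ℝ, 0 ≤ t → ContinuousAt I t := fun t ht => (hsol t ht).2.continuousAt
  set A : Set ℝ := Icc 0 t1 ∩ I ⁻¹' (Ici 0) with hA
  have hIcontOn : ContinuousOn I (Icc 0 t1) := fun x hx => (hIcont x hx.1).continuousWithinAt
  have hAclosed : IsClosed A := hIcontOn.preimage_isClosed_of_isClosed isClosed_Icc isClosed_Ici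
  have hAne : A.Nonempty := ⟨0, ⟨le_refl 0, ht1⟩, hI0⟩
  have hAbdd : BddAbove A := ⟨t1, fun x hx => hx.1.2⟩
  set t2 := sSup A with ht2
  have ht2A : t2 ∈ A := hAclosed.csSup_mem hAne hAbdd
  have ht2mem : t2 ∈ Icc 0 t1 := ht2A.1
  have hIt2 : 0 ≤ I t2 := ht2A.2
  have ht2lt : t2 < t1 := lt_of_le_of_ne ht2mem.2 (fun h => (not_le.2 hIt1) (h ▸ hIt2))
  -- I t2 = 0
  have hIt2z : I t2 = 0 := by
    rcases eq_or_lt_of_le hIt2 with h | h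
    · exact h.symm
    · exfalso
      have hc := hIcont t2 ht2mem.1
      have hev : ∀ᶠ x in 𝓝 t2, 0 < I x := hc.eventually (eventually_gt_nhds h)
      rw [Metric.eventually_nhds_iff] at hev
      obtain ⟨ε, hε, hball⟩ := hev
      set x := min (t2 + ε / 2) t1 with hxdef
      have hxgt : t2 < x := lt_min (by linarith) ht2lt
      have hxle : x ≤ t1 := min_le_right _ _
      have hxd : dist x t2 < ε := by
        rw [Real.dist_eq, abs_of_pos (by linarith)]
        have : x ≤ t2 + ε / 2 := min_le_left _ _
        linarith
      have hxA : x ∈ A := ⟨⟨le_trans ht2mem.1 hxgt.le, hxle⟩, (hball hxd).le⟩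
      exact absurd (le_csSup hAbdd hxA) (not_le.2 hxgt)
  -- Gronwall on [t2, t1]
  have h02 : (0:ℝ) ≤ t2 := ht2mem.1
  have hcontS2 : ContinuousOn S (Icc t2 t1) :=
    fun x hx => (hScont x (le_trans h02 hx.1)).continuousWithinAt
  have hcontI2 : ContinuousOn I (Icc t2 t1) :=
    fun x hx => (hIcont x (le_trans h02 hx.1)).continuousWithinAt
  set φ : ℝ → ℝ := fun x => -m - (cIS * S x + cII * I x) + β * S x - γ - μ with hφ
  have hφcont : ContinuousOn φ (Icc t2 t1) := by
    apply ContinuousOn.sub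
    apply ContinuousOn.sub
    apply ContinuousOn.add
    apply ContinuousOn.sub
    · exact continuousOn_const
    · exact (continuousOn_const.mul hcontS2).add (continuousOn_const.mul hcontI2)
    · exact continuousOn_const.mul hcontS2
    all_goals exact continuousOn_const
  obtain ⟨C, hC⟩ := (isCompact_Icc).exists_bound_of_continuousOn hφcont
  have key : ∀ x ∈ Icc t2 t1, ‖I x‖ ≤ gronwallBound 0 C 0 (x - t2) := by
    apply norm_le_gronwallBound_of_norm_deriv_right_le hcontI2
    · intro x hx
      exact ((hsol x (le_trans h02 hx.1)).2).hasDerivWithinAt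
    · simp [hIt2z]
    · intro x hx
      have hx' : x ∈ Icc t2 t1 := ⟨hx.1, hx.2.le⟩
      have h1 : ‖φ x‖ ≤ C := hC x hx'
      have heq : -(m * I x) - (cIS * S x + cII * I x) * I x
          + β * S x * I x - γ * I x - μ * I x = φ x * I x := by
        simp only [hφ]; ring
      rw [heq]
      have : ‖φ x * I x‖ = ‖φ x‖ * ‖I x‖ := norm_mul _ _
      rw [this]
      have hnn : (0:ℝ) ≤ ‖I x‖ := norm_nonneg _
      nlinarith [norm_nonneg (φ x)]
  have := key t1 ⟨ht2lt.le, le_refl t1⟩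
  rw [gronwallBound_ε0] at this
  simp at this
  linarith

lemma aux_cross (u i G ρ M : ℝ) (hi : 0 ≤ i) (h1 : -ρ ≤ u) (h2 : u ≤ ρ)
    (h3 : -M ≤ G) (h4 : G ≤ M) : 2 * u * (i * G) ≤ 2 * ρ * M * i := by
  nlinarith [mul_nonneg (mul_nonneg hi (by linarith : (0:ℝ) ≤ ρ + u)) (by linarith : (0:ℝ) ≤ M - G),
    mul_nonneg (mul_nonneg hi (by linarith : (0:ℝ) ≤ ρ - u)) (by linarith : (0:ℝ) ≤ M + G)]

lemma aux_F (u i b βc ρ c0 cII : ℝ) (h1 : -ρ ≤ u) (h2 : u ≤ ρ) (hb1 : βc ≤ b)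
    (hb2 : -b ≤ βc) (hρb : ρ * b ≤ c0 / 2) (hi : 0 ≤ i) (hcII : 0 ≤ cII) :
    -c0 + βc * u - cII * i ≤ -(c0 / 2) := by
  nlinarith [mul_nonneg (by linarith : (0:ℝ) ≤ b - βc) (by linarith : (0:ℝ) ≤ ρ + u),
    mul_nonneg (by linarith : (0:ℝ) ≤ b + βc) (by linarith : (0:ℝ) ≤ ρ - u),
    mul_nonneg hcII hi]

lemma aux_h1 (u S1 cSS : ℝ) (hcSS : 0 ≤ cSS) (h : 0 ≤ S1 + 2 * u) :
    2 * u * (-cSS * (S1 + u) * u) ≤ -(cSS * S1) * u ^ 2 := by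
  nlinarith [mul_nonneg (mul_nonneg hcSS (sq_nonneg u)) h]

lemma aux_h2 (K i x c : ℝ) (hK : 0 ≤ K) (hi : 0 ≤ i) (hx : x ≤ c) :
    K * (i * x) ≤ K * i * c := by nlinarith [mul_nonneg hK hi]

lemma aux_h3 (K i c0 P : ℝ) (h : K * c0 = P) : K * i * (-(c0 / 2)) = -(P / 2 * i) := by
  linear_combination (-(i) / 2) * h

lemma aux_h4 (lam c u : ℝ) (h : lam ≤ c) : -c * u ^ 2 ≤ -lam * u ^ 2 := by
  nlinarith [sq_nonneg u]

lemma aux_h5 (lam K i : ℝ) (h : lam * K ≤ 1) (hi : 0 ≤ i) : -i ≤ -lam * (K * i) := by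
  nlinarith [mul_nonneg (by linarith : (0:ℝ) ≤ 1 - lam * K) hi]

lemma aux_G (c s shi A : ℝ) (hc : 0 ≤ c) (hs0 : 0 ≤ s) (hs : s ≤ shi) (hA : 0 ≤ A) :
    -(A + c * shi) ≤ A - c * s ∧ A - c * s ≤ A + c * shi := by
  constructor <;> nlinarith [mul_nonneg hc hs0, mul_le_mul_of_nonneg_left hs hc]


lemma aux_abs_lt (x ε : ℝ) (hε : 0 < ε) (h : x ^ 2 < ε ^ 2) : |x| < ε := by
  rw [← Real.sqrt_sq_eq_abs, ← Real.sqrt_sq hε.le]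
  exact Real.sqrt_lt_sqrt (sq_nonneg x) h

lemma aux_abs_le (x B : ℝ) (h : x ^ 2 ≤ B) : |x| ≤ Real.sqrt B := by
  rw [← Real.sqrt_sq_eq_abs]
  exact Real.sqrt_le_sqrt h


set_option maxHeartbeats 1000000 in
lemma master (r m β γ μ cSS cSI cIS cII a : ℝ)
    (hp : ParamsPos r m β γ μ cSS cSI cIS cII a) (hrm : m < r)
    (hs : ((r - m) / cSS) * (β - cIS) < m + γ + μ) :
    ∃ K lam η : ℝ, 0 < K ∧ 0 < lam ∧ 0 < η ∧
      ∀ S I : ℝ → ℝ, IsSol r m β γ μ cSS cSI cIS cII a S I → 0 ≤ I 0 →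
        (S 0 - (r - m) / cSS) ^ 2 + K * I 0 < η →
        ∀ t : ℝ, 0 ≤ t →
          (S t - (r - m) / cSS) ^ 2 + K * I t ≤
            ((S 0 - (r - m) / cSS) ^ 2 + K * I 0) * Real.exp (-(lam * t)) := by
  obtain ⟨hr, hm, hβ, hγ, hμ, hcSS, hcSI, hcIS, hcII, ha, ha1⟩ := hp
  set S1 : ℝ := (r - m) / cSS with hS1def
  have hS1pos : 0 < S1 := div_pos (by linarith) hcSS
  have hcS1 : cSS * S1 = r - m := by
    rw [hS1def]; field_simp
  set c0 : ℝ := m + γ + μ - S1 * (β - cIS) with hc0def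
  have hc0 : 0 < c0 := by rw [hc0def]; linarith [hs]
  set b : ℝ := |β - cIS| with hbdef
  have hb0 : 0 ≤ b := abs_nonneg _
  have hb1 : β - cIS ≤ b := le_abs_self _
  have hb2 : -b ≤ β - cIS := neg_abs_le _
  set ρ : ℝ := min (S1 / 2) (c0 / (2 * (b + 1))) with hρdef
  have hρpos : 0 < ρ := lt_min (by linarith) (by positivity)
  have hρ1 : ρ ≤ S1 / 2 := min_le_left _ _
  have hρb : ρ * b ≤ c0 / 2 := by
    have h2 : ρ ≤ c0 / (2 * (b + 1)) := min_le_right _ _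
    rw [le_div_iff₀ (by positivity)] at h2
    have he : ρ * (2 * (b + 1)) = 2 * (ρ * b) + 2 * ρ := by ring
    linarith [hρpos.le]
  set M : ℝ := a * r + (cSI + β) * (S1 + ρ) + γ with hMdef
  have hMpos : 0 < M := by
    have h1 := mul_pos (add_pos hcSI hβ) (add_pos hS1pos hρpos)
    have h2 := mul_pos ha hr
    rw [hMdef]
    linarith
  set K : ℝ := (4 * ρ * M + 2) / c0 with hKdef
  have hKpos : 0 < K := div_pos (by have := mul_pos hρpos hMpos; linarith) hc0
  have hKc0 : K * c0 = 4 * ρ * M + 2 := by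
    rw [hKdef]; field_simp
  set lam : ℝ := min (cSS * S1) (1 / K) with hlamdef
  have hlampos : 0 < lam := lt_min (mul_pos hcSS hS1pos) (by positivity)
  have hlam1 : lam ≤ cSS * S1 := min_le_left _ _
  have hlam2 : lam * K ≤ 1 := by
    have := min_le_right (cSS * S1) (1 / K)
    rw [le_div_iff₀ hKpos] at this
    linarith
  set η : ℝ := min (ρ ^ 2) (K * ρ) with hηdef
  have hηpos : 0 < η := lt_min (by positivity) (mul_pos hKpos hρpos)
  refine ⟨K, lam, η, hKpos, hlampos, hηpos, ?_⟩
  intro S I hsol hI0 hV0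
  have hInn : ∀ t : ℝ, 0 ≤ t → 0 ≤ I t :=
    I_nonneg r m β γ μ cSS cSI cIS cII a S I hsol hI0
  set V : ℝ → ℝ := fun t => (S t - S1) ^ 2 + K * I t with hVdef
  have hV0' : V 0 < η := hV0
  set SD : ℝ → ℝ := fun t => r * S t + a * r * I t - m * S t
      - (cSS * S t + cSI * I t) * S t - β * S t * I t + γ * I t with hSDdef
  set ID : ℝ → ℝ := fun t => -(m * I t) - (cIS * S t + cII * I t) * I t
      + β * S t * I t - γ * I t - μ * I t with hIDdef
  set VD : ℝ → ℝ := fun t => 2 * (S t - S1) * SD t + K * ID t with hVDdef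
  have hVd : ∀ t : ℝ, 0 ≤ t → HasDerivAt V (VD t) t := by
    intro t ht
    have h1 := (hsol t ht).1
    have h2 := (hsol t ht).2
    have h3 : HasDerivAt (fun s => (S s - S1) ^ 2) (2 * (S t - S1) * SD t) t := by
      have h : HasDerivAt (fun s => (S s - S1) ^ 2) _ t := (h1.sub_const S1).fun_pow 2
      convert h using 1
      simp only [hSDdef]
      push_cast
      ring
    exact h3.add (h2.const_mul K)
  have hVcont : ∀ t : ℝ, 0 ≤ t → ContinuousAt V t := fun t ht =>
    (((hsol t ht).1.continuousAt.sub continuousAt_const).pow 2).add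
      (continuousAt_const.mul (hsol t ht).2.continuousAt)
  have hVnonneg : ∀ t : ℝ, 0 ≤ t → 0 ≤ V t := fun t ht =>
    add_nonneg (sq_nonneg _) (mul_nonneg hKpos.le (hInn t ht))
  -- key derivative inequality in the region V ≤ η
  have hkey : ∀ t : ℝ, 0 ≤ t → V t ≤ η → VD t ≤ -lam * V t := by
    intro t ht hVt
    have hipos : 0 ≤ I t := hInn t ht
    have hKi : 0 ≤ K * I t := mul_nonneg hKpos.le hipos
    have hu2 : (S t - S1) ^ 2 ≤ ρ ^ 2 := by
      have := min_le_left (ρ ^ 2) (K * ρ)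
      simp only [hVdef] at hVt
      linarith
    set u : ℝ := S t - S1 with hudef
    set i : ℝ := I t with hidef
    have habs : |u| ≤ ρ := by
      rw [← Real.sqrt_sq_eq_abs]
      calc Real.sqrt (u ^ 2) ≤ Real.sqrt (ρ ^ 2) := Real.sqrt_le_sqrt hu2
        _ = ρ := Real.sqrt_sq hρpos.le
    have huρ : -ρ ≤ u ∧ u ≤ ρ := abs_le.mp habs
    have hiρ : i ≤ ρ := by
      have h1 : K * i ≤ η := by
        have hVt2 : u ^ 2 + K * i ≤ η := hVt
        have := sq_nonneg u
        linarith
      have h2 : η ≤ K * ρ := min_le_right _ _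
      exact le_of_mul_le_mul_left (by linarith) hKpos
    have hsval : S t = S1 + u := by rw [hudef]; ring
    have hSlow : S1 / 2 ≤ S1 + u := by linarith [huρ.1]
    -- decompositions
    have e1 : SD t = -cSS * (S1 + u) * u + i * (a * r - cSI * (S1 + u) - β * (S1 + u) + γ) := by
      simp only [hSDdef]
      rw [hsval, ← hidef, show r = m + cSS * S1 by linarith [hcS1]]
      ring
    have e2 : ID t = i * (-c0 + (β - cIS) * u - cII * i) := by
      simp only [hIDdef]
      rw [hsval, ← hidef, hc0def]
      ring
    set G : ℝ := a * r - cSI * (S1 + u) - β * (S1 + u) + γ with hGdef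
    have hGeq : G = (a * r + γ) - (cSI + β) * (S1 + u) := by rw [hGdef]; ring
    have hMeq : M = (a * r + γ) + (cSI + β) * (S1 + ρ) := by rw [hMdef]; ring
    have hauxG := aux_G (cSI + β) (S1 + u) (S1 + ρ) (a * r + γ)
      (by linarith) (by linarith) (by linarith [huρ.2]) (by have := mul_pos ha hr; linarith)
    have hG1 : G ≤ M := by rw [hGeq, hMeq]; linarith [hauxG.2]
    have hG2 : -M ≤ G := by rw [hGeq, hMeq]; linarith [hauxG.1]
    have hcross : 2 * u * (i * G) ≤ 2 * ρ * M * i :=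
      aux_cross u i G ρ M hipos huρ.1 huρ.2 hG2 hG1
    have hF : -c0 + (β - cIS) * u - cII * i ≤ -(c0 / 2) :=
      aux_F u i b (β - cIS) ρ c0 cII huρ.1 huρ.2 hb1 hb2 hρb hipos hcII.le
    have h1 : 2 * u * (-cSS * (S1 + u) * u) ≤ -(cSS * S1) * u ^ 2 :=
      aux_h1 u S1 cSS hcSS.le (by linarith [huρ.1])
    have h2 : K * (i * (-c0 + (β - cIS) * u - cII * i)) ≤ K * i * (-(c0 / 2)) :=
      aux_h2 K i _ _ hKpos.le hipos hF
    have h3 : K * i * (-(c0 / 2)) = -((2 * ρ * M + 1) * i) := by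
      have := aux_h3 K i c0 (4 * ρ * M + 2) hKc0
      linarith [this]
    have h4 : -(cSS * S1) * u ^ 2 ≤ -lam * u ^ 2 := aux_h4 lam (cSS * S1) u hlam1
    have h5 : -i ≤ -lam * (K * i) := aux_h5 lam K i hlam2 hipos
    have hVt' : V t = u ^ 2 + K * i := rfl
    simp only [hVDdef]
    rw [e1, e2, hVt']
    have expand : 2 * u * (-cSS * (S1 + u) * u + i * G) + K * (i * (-c0 + (β - cIS) * u - cII * i))
        = 2 * u * (-cSS * (S1 + u) * u) + 2 * u * (i * G)
          + K * (i * (-c0 + (β - cIS) * u - cII * i)) := by ring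
    calc 2 * u * (-cSS * (S1 + u) * u + i * G) + K * (i * (-c0 + (β - cIS) * u - cII * i))
        = 2 * u * (-cSS * (S1 + u) * u) + 2 * u * (i * G)
          + K * (i * (-c0 + (β - cIS) * u - cII * i)) := by ring
      _ ≤ -(cSS * S1) * u ^ 2 + 2 * ρ * M * i + K * i * (-(c0 / 2)) :=
          add_le_add (add_le_add h1 hcross) h2
      _ = -(cSS * S1) * u ^ 2 + -i := by rw [h3]; ring
      _ ≤ -lam * u ^ 2 + (-lam * (K * i)) := add_le_add h4 h5
      _ = -lam * (u ^ 2 + K * i) := by ring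
  -- invariance: V stays ≤ η
  have hVle : ∀ t : ℝ, 0 ≤ t → V t ≤ η := by
    by_contra hx
    push_neg at hx
    obtain ⟨t1, ht1, hVt1⟩ := hx
    set E : Set ℝ := {t : ℝ | 0 ≤ t ∧ η < V t} with hEdef
    have hEne : E.Nonempty := ⟨t1, ht1, hVt1⟩
    have hEbdd : BddBelow E := ⟨0, fun x hx => hx.1⟩
    set t0 : ℝ := sInf E with ht0def
    have ht0nn : 0 ≤ t0 := le_csInf hEne fun x hx => hx.1
    have hηt0 : η ≤ V t0 := by
      by_contra hlt
      push_neg at hlt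
      have hev : ∀ᶠ x in 𝓝 t0, V x < η := (hVcont t0 ht0nn).eventually (eventually_lt_nhds hlt)
      rw [Metric.eventually_nhds_iff] at hev
      obtain ⟨ε, hε, hball⟩ := hev
      obtain ⟨x, hxE, hxlt⟩ := Real.lt_sInf_add_pos hEne hε
      have hd : dist x t0 < ε := by
        rw [Real.dist_eq, abs_of_nonneg (by linarith [csInf_le hEbdd hxE])]
        linarith
      exact absurd (hball hd) (not_lt.2 hxE.2.le)
    have ht0pos : 0 < t0 :=
      lt_of_le_of_ne ht0nn fun h => absurd hηt0 (by rw [← h]; exact not_le.2 hV0)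
    have hle_before : ∀ s : ℝ, 0 ≤ s → s < t0 → V s ≤ η := fun s hs hst =>
      le_of_not_gt fun h => absurd (csInf_le hEbdd ⟨hs, h⟩) (not_le.2 hst)
    have hVt0le : V t0 ≤ η := by
      have htend : Tendsto V (𝓝[<] t0) (𝓝 (V t0)) :=
        ((hVcont t0 ht0nn).continuousWithinAt).tendsto
      refine le_of_tendsto htend ?_
      filter_upwards [Ioo_mem_nhdsLT_of_mem (⟨ht0pos, le_refl t0⟩ : t0 ∈ Ioc 0 t0)] with s hs
      exact hle_before s hs.1.le hs.2
    have hanti : AntitoneOn V (Icc 0 t0) := by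
      apply antitoneOn_of_deriv_nonpos (convex_Icc 0 t0)
      · exact fun x hx => (hVcont x hx.1).continuousWithinAt
      · intro x hx
        rw [interior_Icc] at hx
        exact (hVd x hx.1.le).differentiableAt.differentiableWithinAt
      · intro x hx
        rw [interior_Icc] at hx
        rw [(hVd x hx.1.le).deriv]
        have hk := hkey x hx.1.le (hle_before x hx.1.le hx.2)
        have := mul_nonneg hlampos.le (hVnonneg x hx.1.le)
        linarith
    have hfinal : V t0 ≤ V 0 :=
      hanti ⟨le_refl 0, ht0nn⟩ ⟨ht0nn, le_refl t0⟩ ht0nn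
    linarith [hfinal, hηt0, hV0']
  -- exponential decay
  intro t ht
  set g : ℝ → ℝ := fun s => V s * Real.exp (lam * s) with hgdef
  have hgd : ∀ s : ℝ, 0 ≤ s →
      HasDerivAt g (VD s * Real.exp (lam * s) + V s * (Real.exp (lam * s) * (lam * 1))) s :=
    fun s hs => (hVd s hs).mul (((hasDerivAt_id s).const_mul lam).exp)
  have hganti : AntitoneOn g (Icc 0 t) := by
    apply antitoneOn_of_deriv_nonpos (convex_Icc 0 t)
    · exact fun x hx => ((hVcont x hx.1).mul (Real.continuous_exp.comp (continuous_const.mul continuous_id)).continuousAt).continuousWithinAt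
    · intro x hx
      rw [interior_Icc] at hx
      exact (hgd x hx.1.le).differentiableAt.differentiableWithinAt
    · intro x hx
      rw [interior_Icc] at hx
      rw [(hgd x hx.1.le).deriv]
      have hk := hkey x hx.1.le (hVle x hx.1.le)
      have he := Real.exp_pos (lam * x)
      have hmul : VD x * Real.exp (lam * x) ≤ (-lam * V x) * Real.exp (lam * x) :=
        mul_le_mul_of_nonneg_right hk he.le
      have heq : (-lam * V x) * Real.exp (lam * x) + V x * (Real.exp (lam * x) * (lam * 1)) = 0 := by
        ring
      linarith
  have hg : g t ≤ g 0 := hganti ⟨le_refl 0, ht⟩ ⟨ht, le_refl t⟩ ht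
  have hg0 : g 0 = V 0 := by simp [hgdef]
  have hVt : V t * Real.exp (lam * t) ≤ V 0 := by rw [← hg0]; exact hg
  have hgoal : V t ≤ V 0 * Real.exp (-(lam * t)) := by
    rw [Real.exp_neg, ← div_eq_mul_inv, le_div_iff₀ (Real.exp_pos _)]
    exact hVt
  exact hgoal

/-- Proposition 3, part 2: if `S1·(β-cIS) < m+γ+μ` the disease-free equilibrium
`(S1, 0)` is locally asymptotically stable. -/
theorem prop3_part2_local_stability
    (r m β γ μ cSS cSI cIS cII a : ℝ)
    (hp : ParamsPos r m β γ μ cSS cSI cIS cII a)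
    (hrm : m < r)
    (hs : ((r - m) / cSS) * (β - cIS) < m + γ + μ) :
    (∀ ε : ℝ, 0 < ε → ∃ δ : ℝ, 0 < δ ∧
      ∀ S I : ℝ → ℝ, IsSol r m β γ μ cSS cSI cIS cII a S I →
        0 ≤ S 0 → 0 ≤ I 0 →
        dist ((S 0, I 0) : ℝ × ℝ) ((r - m) / cSS, 0) < δ →
        ∀ t : ℝ, 0 ≤ t → dist ((S t, I t) : ℝ × ℝ) ((r - m) / cSS, 0) < ε) ∧
    (∃ δ₀ : ℝ, 0 < δ₀ ∧
      ∀ S I : ℝ → ℝ, IsSol r m β γ μ cSS cSI cIS cII a S I →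
        0 ≤ S 0 → 0 ≤ I 0 →
        dist ((S 0, I 0) : ℝ × ℝ) ((r - m) / cSS, 0) < δ₀ →
        Tendsto (fun t => (S t, I t)) atTop (𝓝 (((r - m) / cSS, 0) : ℝ × ℝ))) := by
  obtain ⟨K, lam, η, hK, hlam, hη, hmain⟩ := master r m β γ μ cSS cSI cIS cII a hp hrm hs
  set S1 : ℝ := (r - m) / cSS with hS1def
  have hK1 : (0:ℝ) < 1 + K := by linarith
  -- preparation: from a distance bound get the Lyapunov bound
  have hprep : ∀ (δ : ℝ), 0 < δ → δ ≤ 1 → ∀ S I : ℝ → ℝ, 0 ≤ I 0 →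
      dist ((S 0, I 0) : ℝ × ℝ) (S1, 0) < δ →
      (S 0 - S1) ^ 2 + K * I 0 < δ * (1 + K) := by
    intro δ hδ hδ1 S I hI0 hdist
    rw [Prod.dist_eq, max_lt_iff] at hdist
    have h1 : |S 0 - S1| < δ := by
      have := hdist.1
      rw [Real.dist_eq] at this
      exact this
    have h2 : I 0 < δ := by
      have := hdist.2
      rw [Real.dist_eq, sub_zero, abs_of_nonneg hI0] at this
      exact this
    have h3 : (S 0 - S1) ^ 2 < δ ^ 2 := by
      rw [← sq_abs]
      exact pow_lt_pow_left₀ h1 (abs_nonneg _) two_ne_zero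
    have h4 : δ ^ 2 ≤ δ := by
      rw [sq]
      calc δ * δ ≤ δ * 1 := mul_le_mul_of_nonneg_left hδ1 hδ.le
        _ = δ := mul_one δ
    have h5 : K * I 0 ≤ K * δ := mul_le_mul_of_nonneg_left h2.le hK.le
    linarith
  constructor
  · -- stability
    intro ε hε
    set c : ℝ := min η (min (ε ^ 2) (K * ε)) with hcdef
    have hc : 0 < c := lt_min hη (lt_min (by positivity) (by positivity))
    refine ⟨min 1 (c / (1 + K)), lt_min one_pos (by positivity), ?_⟩
    intro S I hsol hS0 hI0 hdist t ht
    set δ : ℝ := min 1 (c / (1 + K)) with hδdef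
    have hδpos : 0 < δ := lt_min one_pos (by positivity)
    have hV0 : (S 0 - S1) ^ 2 + K * I 0 < δ * (1 + K) :=
      hprep δ hδpos (min_le_left _ _) S I hI0 hdist
    have hδc : δ * (1 + K) ≤ c := by
      have h : δ ≤ c / (1 + K) := min_le_right _ _
      calc δ * (1 + K) ≤ (c / (1 + K)) * (1 + K) := mul_le_mul_of_nonneg_right h hK1.le
        _ = c := div_mul_cancel₀ _ (ne_of_gt hK1)
    have hV0c : (S 0 - S1) ^ 2 + K * I 0 < c := lt_of_lt_of_le hV0 hδc
    have hV0η : (S 0 - S1) ^ 2 + K * I 0 < η := lt_of_lt_of_le hV0c (min_le_left _ _)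
    have hVt := hmain S I hsol hI0 hV0η t ht
    have hV0nn : 0 ≤ (S 0 - S1) ^ 2 + K * I 0 :=
      add_nonneg (sq_nonneg _) (mul_nonneg hK.le hI0)
    have hexp : Real.exp (-(lam * t)) ≤ 1 :=
      Real.exp_le_one_iff.2 (neg_nonpos.2 (mul_nonneg hlam.le ht))
    have hmul : ((S 0 - S1) ^ 2 + K * I 0) * Real.exp (-(lam * t)) ≤
        ((S 0 - S1) ^ 2 + K * I 0) * 1 := mul_le_mul_of_nonneg_left hexp hV0nn
    have hVt1 : (S t - S1) ^ 2 + K * I t < c := by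
      rw [mul_one] at hmul
      linarith
    have hIt : 0 ≤ I t := I_nonneg r m β γ μ cSS cSI cIS cII a S I hsol hI0 t ht
    have hc1 : c ≤ ε ^ 2 := le_trans (min_le_right _ _) (min_le_left _ _)
    have hc2 : c ≤ K * ε := le_trans (min_le_right _ _) (min_le_right _ _)
    rw [Prod.dist_eq, max_lt_iff]
    constructor
    · rw [Real.dist_eq]
      apply aux_abs_lt _ _ hε
      have := mul_nonneg hK.le hIt
      linarith
    · rw [Real.dist_eq, sub_zero, abs_of_nonneg hIt]
      have hKIt : K * I t < K * ε := by linarith [sq_nonneg (S t - S1)]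
      exact lt_of_mul_lt_mul_left hKIt hK.le
  · -- attractivity
    refine ⟨min 1 (η / (1 + K)), lt_min one_pos (by positivity), ?_⟩
    intro S I hsol hS0 hI0 hdist
    set δ : ℝ := min 1 (η / (1 + K)) with hδdef
    have hδpos : 0 < δ := lt_min one_pos (by positivity)
    have hV0 : (S 0 - S1) ^ 2 + K * I 0 < δ * (1 + K) :=
      hprep δ hδpos (min_le_left _ _) S I hI0 hdist
    have hδc : δ * (1 + K) ≤ η := by
      have h : δ ≤ η / (1 + K) := min_le_right _ _
      calc δ * (1 + K) ≤ (η / (1 + K)) * (1 + K) := mul_le_mul_of_nonneg_right h hK1.le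
        _ = η := div_mul_cancel₀ _ (ne_of_gt hK1)
    have hV0η : (S 0 - S1) ^ 2 + K * I 0 < η := lt_of_lt_of_le hV0 hδc
    have hVt := hmain S I hsol hI0 hV0η
    set V0 : ℝ := (S 0 - S1) ^ 2 + K * I 0 with hV0def
    set B : ℝ → ℝ := fun t => V0 * Real.exp (-(lam * t)) with hBdef
    have hBtend : Tendsto B atTop (𝓝 0) := by
      have h1 : Tendsto (fun t : ℝ => lam * t) atTop atTop :=
        Tendsto.const_mul_atTop hlam tendsto_id
      have h2 : Tendsto (fun t : ℝ => -(lam * t)) atTop atBot :=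
        tendsto_neg_atTop_atBot.comp h1
      have h3 : Tendsto (fun t : ℝ => Real.exp (-(lam * t))) atTop (𝓝 0) :=
        Real.tendsto_exp_atBot.comp h2
      have h4 := h3.const_mul V0
      simpa using h4
    have hInn : ∀ t : ℝ, 0 ≤ t → 0 ≤ I t :=
      I_nonneg r m β γ μ cSS cSI cIS cII a S I hsol hI0
    -- I tends to 0
    have hItend : Tendsto I atTop (𝓝 0) := by
      have hBdiv : Tendsto (fun t => B t / K) atTop (𝓝 0) := by
        simpa using hBtend.div_const K
      apply tendsto_of_tendsto_of_tendsto_of_le_of_le' tendsto_const_nhds hBdiv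
      · filter_upwards [eventually_ge_atTop (0:ℝ)] with t ht
        exact hInn t ht
      · filter_upwards [eventually_ge_atTop (0:ℝ)] with t ht
        have h := hVt t ht
        have hBt : B t = V0 * Real.exp (-(lam * t)) := rfl
        rw [le_div_iff₀ hK, hBt]
        linarith [sq_nonneg (S t - S1)]
    -- S tends to S1
    have hStend : Tendsto S atTop (𝓝 S1) := by
      have hsq : Tendsto (fun t => Real.sqrt (B t)) atTop (𝓝 0) := by
        have := (Real.continuous_sqrt.continuousAt (x := (0:ℝ))).tendsto.comp hBtend
        simpa [Function.comp_def] using this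
      have hzero : Tendsto (fun t => S t - S1) atTop (𝓝 0) := by
        apply squeeze_zero_norm' _ hsq
        filter_upwards [eventually_ge_atTop (0:ℝ)] with t ht
        have h := hVt t ht
        have hBt : B t = V0 * Real.exp (-(lam * t)) := rfl
        have : (S t - S1) ^ 2 ≤ B t := by
          rw [hBt]
          linarith [mul_nonneg hK.le (hInn t ht)]
        simpa [Real.norm_eq_abs] using aux_abs_le _ _ this
      have := hzero.add_const S1
      simpa using this
    exact hStend.prodMk_nhds hItend
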